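/- The five diagonal matrix H admits the Cholesky factorization H = T·Tᵀ; entrywise: for all n, m ≥ 0, ⟨(x−c)² s_n^{M,N}, s_m^{M,N}⟩_S = Σ_{j=0}^{min(n,m)} γ_{j,n}·γ_{j,m}. -/

import Mathlib

open MeasureTheory Polynomial

/-- Squared norm `‖Q‖_μ² = ∫ Q(x)² dμ`. -/
noncomputable def nrmSq (μ : Measure ℝ) (Q : Polynomial ℝ) : ℝ := ∫ x, Q.eval x ^ 2 ∂μ

/-- Squared norm in the 2-iterated Christoffel measure `(x-c)² dμ`. -/
noncomputable def nrmSq2 (μ : Measure ℝ) (c : ℝ) (Q : Polynomial ℝ) : ℝ :=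
  ∫ x, Q.eval x ^ 2 * (x - c) ^ 2 ∂μ

/-- Sobolev-type inner product `⟨f,g⟩_S = ∫ f g dμ + M f(c) g(c) + N f'(c) g'(c)`. -/
noncomputable def ipS (μ : Measure ℝ) (c M N : ℝ) (f g : Polynomial ℝ) : ℝ :=
  (∫ x, f.eval x * g.eval x ∂μ) + M * (f.eval c * g.eval c)
    + N * ((derivative f).eval c * (derivative g).eval c)

/-- Leading coefficient `r_n = 1/‖P_n‖_μ` of the orthonormal polynomial `p_n`. -/
noncomputable def rC (μ : Measure ℝ) (P : ℕ → Polynomial ℝ) (n : ℕ) : ℝ :=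
  1 / Real.sqrt (nrmSq μ (P n))

/-- Leading coefficient `r_n^{[2]} = 1/‖P_n^{[2]}‖_{[2]}`. -/
noncomputable def r2C (μ : Measure ℝ) (c : ℝ) (P2 : ℕ → Polynomial ℝ) (n : ℕ) : ℝ :=
  1 / Real.sqrt (nrmSq2 μ c (P2 n))

/-- Orthonormal polynomial `p_n = P_n/‖P_n‖_μ`. -/
noncomputable def onP (μ : Measure ℝ) (P : ℕ → Polynomial ℝ) (n : ℕ) : Polynomial ℝ :=
  C (rC μ P n) * P n

/-- Orthonormal polynomial `p_n^{[2]} = P_n^{[2]}/‖P_n^{[2]}‖_{[2]}`. -/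
noncomputable def onP2 (μ : Measure ℝ) (c : ℝ) (P2 : ℕ → Polynomial ℝ) (n : ℕ) : Polynomial ℝ :=
  C (r2C μ c P2 n) * P2 n

/-- Leading coefficient `t_n = 1/‖S_n^{M,N}‖_S` of the Sobolev-type orthonormal polynomial. -/
noncomputable def tC (μ : Measure ℝ) (c M N : ℝ) (S : ℕ → Polynomial ℝ) (n : ℕ) : ℝ :=
  1 / Real.sqrt (ipS μ c M N (S n) (S n))

/-- Sobolev-type orthonormal polynomial `s_n^{M,N} = S_n^{M,N}/‖S_n^{M,N}‖_S`. -/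
noncomputable def sN (μ : Measure ℝ) (c M N : ℝ) (S : ℕ → Polynomial ℝ) (n : ℕ) : Polynomial ℝ :=
  C (tC μ c M N S n) * S n

/-- Diagonal kernel value `K_n(c,c) = Σ_{j=0}^n P_j(c)²/‖P_j‖_μ²`. -/
noncomputable def Kcc (μ : Measure ℝ) (P : ℕ → Polynomial ℝ) (c : ℝ) (n : ℕ) : ℝ :=
  ∑ j ∈ Finset.range (n + 1), (P j).eval c ^ 2 / nrmSq μ (P j)

/-- Kernel `K_n^{(0,j)}(x,c)` as a polynomial in `x`:
`Σ_{k=0}^n (d/dy)^j P_k(y)|_{y=c} · P_k(x)/‖P_k‖_μ²`. -/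
noncomputable def Kpoly (μ : Measure ℝ) (P : ℕ → Polynomial ℝ) (c : ℝ) (n j : ℕ) : Polynomial ℝ :=
  ∑ k ∈ Finset.range (n + 1), C ((derivative^[j] (P k)).eval c / nrmSq μ (P k)) * P k

/-- Mixed derivative of the kernel at the diagonal:
`K_n^{(i,j)}(c,c) = Σ_{k=0}^n P_k^{(i)}(c) P_k^{(j)}(c)/‖P_k‖_μ²`. -/
noncomputable def Kder (μ : Measure ℝ) (P : ℕ → Polynomial ℝ) (c : ℝ) (n i j : ℕ) : ℝ :=
  ∑ k ∈ Finset.range (n + 1),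
    (derivative^[i] (P k)).eval c * (derivative^[j] (P k)).eval c / nrmSq μ (P k)

/-- Connection coefficient `d_n`. -/
noncomputable def dCoef (P : ℕ → Polynomial ℝ) (c : ℝ) (n : ℕ) : ℝ :=
  ((P (n + 2)).eval c * (derivative (P n)).eval c
      - (derivative (P (n + 2))).eval c * (P n).eval c) /
    ((P (n + 1)).eval c * (derivative (P n)).eval c
      - (derivative (P (n + 1))).eval c * (P n).eval c)

/-- Connection coefficient `e_n`. -/
noncomputable def eCoef (P : ℕ → Polynomial ℝ) (c : ℝ) (n : ℕ) : ℝ :=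
  ((P (n + 2)).eval c * (derivative (P (n + 1))).eval c
      - (derivative (P (n + 2))).eval c * (P (n + 1)).eval c) /
    ((P (n + 1)).eval c * (derivative (P n)).eval c
      - (derivative (P (n + 1))).eval c * (P n).eval c)

/-- Connection coefficient `γ_{j,n} = ⟨s_n^{M,N}, p_j^{[2]}⟩_{[2]}`. -/
noncomputable def gamC (μ : Measure ℝ) (c M N : ℝ) (S P2 : ℕ → Polynomial ℝ) (j n : ℕ) : ℝ :=
  ∫ x, (sN μ c M N S n).eval x * (onP2 μ c P2 j).eval x * (x - c) ^ 2 ∂μ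

/-- Jacobi matrix of `μ`: `J(n,m) = ∫ x p_n(x) p_m(x) dμ`. -/
noncomputable def Jmat (μ : Measure ℝ) (P : ℕ → Polynomial ℝ) (n m : ℕ) : ℝ :=
  ∫ x, x * ((onP μ P n).eval x * (onP μ P m).eval x) ∂μ

/-- Jacobi matrix of `(x-c)² dμ`: `J_{[2]}(n,m) = ∫ x p_n^{[2]}(x) p_m^{[2]}(x) (x-c)² dμ`. -/
noncomputable def J2mat (μ : Measure ℝ) (c : ℝ) (P2 : ℕ → Polynomial ℝ) (n m : ℕ) : ℝ :=
  ∫ x, x * ((onP2 μ c P2 n).eval x * (onP2 μ c P2 m).eval x) * (x - c) ^ 2 ∂μ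

/-- Five-diagonal matrix `H(n,m) = ⟨(x-c)² s_n^{M,N}, s_m^{M,N}⟩_S`. -/
noncomputable def Hmat (μ : Measure ℝ) (c M N : ℝ) (S : ℕ → Polynomial ℝ) (n m : ℕ) : ℝ :=
  ipS μ c M N ((X - C c) ^ 2 * sN μ c M N S n) (sN μ c M N S m)

/-- Kronecker delta. -/
noncomputable def kdel (n m : ℕ) : ℝ := if n = m then 1 else 0

namespace Stmt16Aux

open MeasureTheory Polynomial

/-- Integral of a polynomial. -/
noncomputable def Ipol (μ : Measure ℝ) (p : Polynomial ℝ) : ℝ := ∫ x, p.eval x ∂μ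

lemma integ_poly {μ : Measure ℝ} (hmom : ∀ n : ℕ, Integrable (fun x : ℝ => x ^ n) μ)
    (p : Polynomial ℝ) : Integrable (fun x => p.eval x) μ := by
  have h : (fun x : ℝ => p.eval x)
      = fun x => ∑ i ∈ Finset.range (p.natDegree + 1), p.coeff i * x ^ i := by
    funext x; exact p.eval_eq_sum_range _
  rw [h]
  exact integrable_finset_sum _ fun i _ => (hmom i).const_mul _

lemma Ipol_add {μ : Measure ℝ} (hmom : ∀ n : ℕ, Integrable (fun x : ℝ => x ^ n) μ)
    (p q : Polynomial ℝ) : Ipol μ (p + q) = Ipol μ p + Ipol μ q := by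
  simp only [Ipol, eval_add]
  exact integral_add (integ_poly hmom p) (integ_poly hmom q)

lemma Ipol_Cmul (μ : Measure ℝ) (a : ℝ) (p : Polynomial ℝ) :
    Ipol μ (C a * p) = a * Ipol μ p := by
  simp only [Ipol, eval_mul, eval_C]
  exact integral_const_mul a _

lemma Ipol_sum {μ : Measure ℝ} (hmom : ∀ n : ℕ, Integrable (fun x : ℝ => x ^ n) μ)
    (s : Finset ℕ) (f : ℕ → Polynomial ℝ) :
    Ipol μ (∑ i ∈ s, f i) = ∑ i ∈ s, Ipol μ (f i) := by
  classical
  induction s using Finset.induction with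
  | empty => simp [Ipol]
  | insert _ _ h ih =>
      rw [Finset.sum_insert h, Finset.sum_insert h, Ipol_add hmom, ih]

/-- The Christoffel inner product as an integral of a polynomial. -/
noncomputable def ip2 (μ : Measure ℝ) (c : ℝ) (Q R : Polynomial ℝ) : ℝ :=
  Ipol μ (Q * R * (X - C c) ^ 2)

lemma ip2_eq_int (μ : Measure ℝ) (c : ℝ) (Q R : Polynomial ℝ) :
    ip2 μ c Q R = ∫ x, Q.eval x * R.eval x * (x - c) ^ 2 ∂μ := by
  simp [ip2, Ipol]

lemma ip2_comm (μ : Measure ℝ) (c : ℝ) (Q R : Polynomial ℝ) :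
    ip2 μ c Q R = ip2 μ c R Q := by
  simp [ip2, mul_comm Q R]

lemma ip2_sum_left {μ : Measure ℝ} (hmom : ∀ n : ℕ, Integrable (fun x : ℝ => x ^ n) μ)
    (c : ℝ) (s : Finset ℕ) (a : ℕ → ℝ) (f : ℕ → Polynomial ℝ) (R : Polynomial ℝ) :
    ip2 μ c (∑ j ∈ s, C (a j) * f j) R = ∑ j ∈ s, a j * ip2 μ c (f j) R := by
  unfold ip2
  rw [Finset.sum_mul, Finset.sum_mul, Ipol_sum hmom]
  refine Finset.sum_congr rfl fun j _ => ?_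
  rw [mul_assoc, mul_assoc, Ipol_Cmul, mul_assoc]

lemma ip2_Cmul_left (μ : Measure ℝ) (c a : ℝ) (Q R : Polynomial ℝ) :
    ip2 μ c (C a * Q) R = a * ip2 μ c Q R := by
  unfold ip2
  rw [mul_assoc, mul_assoc, Ipol_Cmul, mul_assoc]

/-- Representation of a polynomial of degree ≤ n in a monic graded family. -/
lemma rep (P2 : ℕ → Polynomial ℝ) (hP2m : ∀ n, (P2 n).Monic)
    (hP2d : ∀ n, (P2 n).natDegree = n) :
    ∀ n : ℕ, ∀ Q : Polynomial ℝ, Q.natDegree ≤ n →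
      ∃ a : ℕ → ℝ, Q = ∑ j ∈ Finset.range (n + 1), C (a j) * P2 j := by
  intro n
  induction n with
  | zero =>
      intro Q hQ
      have h0 : P2 0 = 1 := ((hP2m 0).natDegree_eq_zero).mp (hP2d 0)
      refine ⟨fun _ => Q.coeff 0, ?_⟩
      rw [Polynomial.eq_C_of_natDegree_le_zero hQ]
      simp [h0]
  | succ n ih =>
      intro Q hQ
      set Q' := Q - C (Q.coeff (n + 1)) * P2 (n + 1) with hQ'def
      have hcoef : (P2 (n + 1)).coeff (n + 1) = 1 := by
        have := (hP2m (n + 1)).coeff_natDegree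
        rwa [hP2d] at this
      have hQ' : Q'.natDegree ≤ n := by
        rw [Polynomial.natDegree_le_iff_coeff_eq_zero]
        intro m hm
        rcases eq_or_lt_of_le (Nat.succ_le_of_lt hm) with h | h
        · simp [hQ'def, ← h, hcoef]
        · have h1 : Q.coeff m = 0 :=
            Polynomial.coeff_eq_zero_of_natDegree_lt (lt_of_le_of_lt hQ h)
          have h2 : (P2 (n + 1)).coeff m = 0 :=
            Polynomial.coeff_eq_zero_of_natDegree_lt (by rw [hP2d]; exact h)
          simp [hQ'def, h1, h2]
      obtain ⟨a, ha⟩ := ih Q' hQ'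
      refine ⟨Function.update a (n + 1) (Q.coeff (n + 1)), ?_⟩
      rw [Finset.sum_range_succ]
      have hsum : ∑ j ∈ Finset.range (n + 1),
          C (Function.update a (n + 1) (Q.coeff (n + 1)) j) * P2 j
          = ∑ j ∈ Finset.range (n + 1), C (a j) * P2 j := by
        refine Finset.sum_congr rfl fun j hj => ?_
        have : j ≠ n + 1 := by
          have := Finset.mem_range.mp hj; omega
        rw [Function.update_of_ne this]
      rw [hsum, Function.update_self, ← ha]
      simp [hQ'def]

end Stmt16Aux

open Stmt16Aux in
/-- the five diagonal matrix `H` admits the Cholesky factorization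
`H = T·Tᵀ`; entrywise
`⟨(x-c)² s_n^{M,N}, s_m^{M,N}⟩_S = Σ_{j=0}^{min(n,m)} γ_{j,n} γ_{j,m}`. -/
theorem stmt16
    (μ : Measure ℝ) [IsFiniteMeasure μ]
    (hmom : ∀ n : ℕ, Integrable (fun x : ℝ => x ^ n) μ)
    (hpos : ∀ q : Polynomial ℝ, q ≠ 0 → 0 < ∫ x, q.eval x ^ 2 ∂μ)
    (c : ℝ) (hc : ∀ᵐ x ∂μ, c < x)
    (P2 : ℕ → Polynomial ℝ) (hP2m : ∀ n, (P2 n).Monic) (hP2d : ∀ n, (P2 n).natDegree = n)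
    (hP2o : ∀ m n, m ≠ n → ∫ x, (P2 m).eval x * (P2 n).eval x * (x - c) ^ 2 ∂μ = 0)
    (M N : ℝ) (hM : 0 ≤ M) (hN : 0 ≤ N)
    (S : ℕ → Polynomial ℝ) (hSm : ∀ n, (S n).Monic) (hSd : ∀ n, (S n).natDegree = n)
    (hSo : ∀ m n, m ≠ n → ipS μ c M N (S m) (S n) = 0) :
    ∀ n m : ℕ,
      Hmat μ c M N S n m
        = ∑ j ∈ Finset.range (min n m + 1), gamC μ c M N S P2 j n * gamC μ c M N S P2 j m := by
    classical
  have horth : ∀ j k, j ≠ k → ip2 μ c (P2 j) (P2 k) = 0 := by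
    intro j k hjk; rw [ip2_eq_int]; exact hP2o j k hjk
  set ν : ℕ → ℝ := fun j => ip2 μ c (P2 j) (P2 j) with hν
  have hν_pos : ∀ j, 0 < ν j := by
    intro j
    have hq : ((X - C c) * P2 j : Polynomial ℝ) ≠ 0 :=
      mul_ne_zero (Polynomial.X_sub_C_ne_zero c) (hP2m j).ne_zero
    have heq : ν j = ∫ x, ((X - C c) * P2 j).eval x ^ 2 ∂μ := by
      show ip2 μ c (P2 j) (P2 j) = _
      rw [ip2_eq_int]
      congr 1; funext x; simp only [eval_mul, eval_sub, eval_X, eval_C]; ring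
    rw [heq]; exact hpos _ hq
  have key : ∀ (n : ℕ) (a : ℕ → ℝ) (j : ℕ),
      ip2 μ c (∑ k ∈ Finset.range (n + 1), C (a k) * P2 k) (P2 j)
        = if j < n + 1 then a j * ν j else 0 := by
    intro n a j
    rw [ip2_sum_left hmom]
    by_cases hj : j < n + 1
    · rw [Finset.sum_eq_single j]
      · rw [if_pos hj]
      · intro k _ hkj; rw [horth k j hkj, mul_zero]
      · intro hj'; exact absurd (Finset.mem_range.mpr hj) hj'
    · rw [Finset.sum_eq_zero, if_neg hj]
      intro k hk
      have hkj : k ≠ j := by have := Finset.mem_range.mp hk; omega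
      rw [horth k j hkj, mul_zero]
  have pair : ∀ (n m : ℕ) (a b : ℕ → ℝ),
      ip2 μ c (∑ j ∈ Finset.range (n + 1), C (a j) * P2 j)
          (∑ k ∈ Finset.range (m + 1), C (b k) * P2 k)
        = ∑ j ∈ Finset.range (min n m + 1), a j * b j * ν j := by
    intro n m a b
    rw [ip2_sum_left hmom]
    have step : ∀ j, ip2 μ c (P2 j) (∑ k ∈ Finset.range (m + 1), C (b k) * P2 k)
        = if j ∈ Finset.range (m + 1) then b j * ν j else 0 := by
      intro j
      rw [ip2_comm, key m b j]
      simp [Finset.mem_range]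
    calc ∑ j ∈ Finset.range (n + 1), a j *
            ip2 μ c (P2 j) (∑ k ∈ Finset.range (m + 1), C (b k) * P2 k)
        = ∑ j ∈ Finset.range (n + 1),
            (if j ∈ Finset.range (m + 1) then a j * b j * ν j else 0) := by
          refine Finset.sum_congr rfl fun j _ => ?_
          rw [step j]
          by_cases hj : j ∈ Finset.range (m + 1) <;> simp [hj, mul_assoc]
      _ = ∑ j ∈ Finset.range (n + 1) ∩ Finset.range (m + 1), a j * b j * ν j :=
          Finset.sum_ite_mem _ _ _
      _ = ∑ j ∈ Finset.range (min n m + 1), a j * b j * ν j := by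
          congr 1; ext k; simp
  have hgam : ∀ (j n : ℕ), gamC μ c M N S P2 j n
      = (tC μ c M N S n * r2C μ c P2 j) * ip2 μ c (S n) (P2 j) := by
    intro j n
    rw [gamC, ip2_eq_int, ← integral_const_mul]
    congr 1; funext x
    simp only [sN, onP2, eval_mul, eval_C]
    ring
  have hnrm : ∀ j, nrmSq2 μ c (P2 j) = ν j := by
    intro j
    show _ = ip2 μ c (P2 j) (P2 j)
    rw [nrmSq2, ip2_eq_int]
    congr 1; funext x; ring
  have hr : ∀ j, r2C μ c P2 j ^ 2 * ν j = 1 := by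
    intro j
    rw [r2C, hnrm j, div_pow, one_pow, Real.sq_sqrt (hν_pos j).le, one_div,
      inv_mul_cancel₀ (hν_pos j).ne']
  intro n m
  obtain ⟨a, ha⟩ := rep P2 hP2m hP2d n (S n) (hSd n).le
  obtain ⟨b, hb⟩ := rep P2 hP2m hP2d m (S m) (hSd m).le
  have hSS : ip2 μ c (S n) (S m) = ∑ j ∈ Finset.range (min n m + 1), a j * b j * ν j := by
    have := pair n m a b
    rw [← ha, ← hb] at this
    exact this
  have hSP : ∀ j, ip2 μ c (S n) (P2 j) = if j < n + 1 then a j * ν j else 0 := by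
    intro j; rw [ha]; exact key n a j
  have hSP' : ∀ j, ip2 μ c (S m) (P2 j) = if j < m + 1 then b j * ν j else 0 := by
    intro j; rw [hb]; exact key m b j
  have hH : Hmat μ c M N S n m
      = (tC μ c M N S n * tC μ c M N S m) * ip2 μ c (S n) (S m) := by
    rw [Hmat, ipS]
    have e1 : ((X - C c) ^ 2 * sN μ c M N S n).eval c = 0 := by
      simp
    have e2 : (derivative ((X - C c) ^ 2 * sN μ c M N S n)).eval c = 0 := by
      simp [derivative_mul, derivative_pow]
    rw [e1, e2]
    simp only [zero_mul, mul_zero, add_zero]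
    rw [ip2_eq_int, ← integral_const_mul]
    congr 1; funext x
    simp only [sN, eval_mul, eval_pow, eval_sub, eval_X, eval_C]
    ring
  rw [hH, hSS, Finset.mul_sum]
  refine Finset.sum_congr rfl fun j hj => ?_
  have hjm : j < min n m + 1 := Finset.mem_range.mp hj
  have hj1 : j < n + 1 := by omega
  have hj2 : j < m + 1 := by omega
  rw [hgam j n, hgam j m, hSP j, hSP' j, if_pos hj1, if_pos hj2]
  linear_combination (-(tC μ c M N S n * tC μ c M N S m * a j * b j * ν j)) * hr j
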